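/- The full subcategory of regular simplicial sets is reflective in the category of simplicial sets: the inclusion functor admits a left adjoint (regularization). -/

import Mathlib

open CategoryTheory GrothendieckTopology Simplicial Opposite Limits

namespace SSet

/-- Naturality of the Yoneda bijection for simplicial sets. -/
lemma yonedaEquiv_symm_naturality' {m n : SimplexCategory} (f : m ⟶ n) (X : SSet)
    (y : X.obj (op n)) :
    SSet.stdSimplex.map f ≫ (yonedaEquiv (X := X) (n := n)).symm y = (yonedaEquiv (X := X) (n := m)).symm (X.map f.op y) := by
  ext k x
  show X.map (x.down ≫ f).op y = X.map x.down.op (X.map f.op y)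
  rw [op_comp, Functor.map_comp_apply]

variable (X : SSet)

/-- A simplex is degenerate if it is the image of a simplex of strictly lower degree
under a simplicial operator. -/
def Degenerate {n : ℕ} (y : X _⦋n⦌) : Prop :=
  ∃ (m : ℕ) (σ : (⦋n⦌ : SimplexCategory) ⟶ ⦋m⦌) (z : X _⦋m⦌), m < n ∧ y = X.map σ.op z

/-- A simplex is non-degenerate if it is not degenerate. -/
def Nondegenerate {n : ℕ} (y : X _⦋n⦌) : Prop := ¬ X.Degenerate y

/-- The representing map `Δ[n] ⟶ X` of the `(n+1)`-st face `y ∘ δₙ₊₁` of an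
`(n+1)`-simplex `y` of `X`. -/
noncomputable def lastFaceMap {n : ℕ} (y : X _⦋n+1⦌) : Δ[n] ⟶ X :=
  (yonedaEquiv (X := X) (n := ⦋n⦌)).symm (X.map (SimplexCategory.δ (Fin.last (n+1))).op y)

/-- The canonical map `Δ[n+1] ⊔_{Δ[n]} Y' ⟶ X`, where `Y'` is the simplicial subset of `X`
generated by the last face of `y` (i.e. the image of the representing map of that face). -/
noncomputable def regularityMap {n : ℕ} (y : X _⦋n+1⦌) :
    pushout (SSet.stdSimplex.{u_1}.map (SimplexCategory.δ (Fin.last (n+1))))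
      (Subfunctor.toRange (X.lastFaceMap y)) ⟶ X :=
  pushout.desc ((yonedaEquiv (X := X) (n := ⦋n+1⦌)).symm y) (Subfunctor.range (X.lastFaceMap y)).ι
    (by rw [yonedaEquiv_symm_naturality']; exact (Subfunctor.toRange_ι _).symm)

/-- A simplicial set is regular if, for each of its non-degenerate simplices `y`,
the canonical map from the pushout `Δ[n+1] ⊔_{Δ[n]} Y'` to `X` is degreewise injective. -/
def IsRegular : Prop :=
  ∀ (n : ℕ) (y : X _⦋n+1⦌), X.Nondegenerate y →
    ∀ (k : SimplexCategoryᵒᵖ), Function.Injective ((X.regularityMap y).app k)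

end SSet
universe u

namespace SSet

lemma std_map_down {m : ℕ} {k k' : SimplexCategoryᵒᵖ} (γ : k ⟶ k') (x : Δ[m].obj k) :
    ((Δ[m].map γ x)).down = γ.unop ≫ x.down := rfl

variable (X : SSet.{u})

lemma map_op_comp_apply {a b c : SimplexCategory} (f : a ⟶ b) (g : b ⟶ c) (y : X.obj (op c)) :
    X.map (f ≫ g).op y = X.map f.op (X.map g.op y) := by
  rw [op_comp, FunctorToTypes.map_comp_apply]

variable {n : ℕ} (y : X _⦋n+1⦌)

/-- relation of the explicit model of the regularity pushout. -/
def RelR (k : SimplexCategoryᵒᵖ) (b b' : Δ[n+1].obj k) : Prop :=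
  b = b' ∨ ((∃ a : k.unop ⟶ ⦋n⦌, b.down = a ≫ SimplexCategory.δ (Fin.last (n+1))) ∧
    (∃ a' : k.unop ⟶ ⦋n⦌, b'.down = a' ≫ SimplexCategory.δ (Fin.last (n+1))) ∧
    X.map b.down.op y = X.map b'.down.op y)

/-- the corresponding setoid. -/
def relSetoid (k : SimplexCategoryᵒᵖ) : Setoid (Δ[n+1].obj k) where
  r := X.RelR y k
  iseqv := by
    constructor
    · exact fun b => Or.inl rfl
    · rintro b b' (rfl | ⟨h1, h2, h3⟩)
      · exact Or.inl rfl
      · exact Or.inr ⟨h2, h1, h3.symm⟩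
    · rintro b b' b'' (rfl | ⟨h1, h2, h3⟩) h'
      · exact h'
      · rcases h' with rfl | ⟨h1', h2', h3'⟩
        · exact Or.inr ⟨h1, h2, h3⟩
        · exact Or.inr ⟨h1, h2', h3.trans h3'⟩

lemma relR_map {k k' : SimplexCategoryᵒᵖ} (γ : k ⟶ k') {b b' : Δ[n+1].obj k}
    (h : X.RelR y k b b') : X.RelR y k' (Δ[n+1].map γ b) (Δ[n+1].map γ b') := by
  rcases h with rfl | ⟨⟨a, ha⟩, ⟨a', ha'⟩, he⟩
  · exact Or.inl rfl
  · refine Or.inr ⟨⟨γ.unop ≫ a, by rw [std_map_down, ha, Category.assoc]⟩,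
      ⟨γ.unop ≫ a', by rw [std_map_down, ha', Category.assoc]⟩, ?_⟩
    rw [std_map_down, std_map_down, map_op_comp_apply, map_op_comp_apply, he]

/-- The explicit model for the regularity pushout. -/
def MQ : SSet.{u} where
  obj k := Quotient (X.relSetoid y k)
  map {k k'} γ := TypeCat.ofHom (Quotient.lift (fun b => Quotient.mk (X.relSetoid y k') (Δ[n+1].map γ b))
    (fun b b' h => Quotient.sound (X.relR_map y γ h)))
  map_id k := by
    ext q
    induction q using Quotient.ind
    simp [FunctorToTypes.map_id_apply]
  map_comp {k k' k''} γ γ' := by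
    ext q
    induction q using Quotient.ind
    simp [FunctorToTypes.map_comp_apply]

/-- first leg. -/
def mqMk : Δ[n+1] ⟶ X.MQ y where
  app k := TypeCat.ofHom fun b => Quotient.mk (X.relSetoid y k) b
  naturality k k' γ := rfl

lemma lastFaceMap_app {k : SimplexCategoryᵒᵖ} (a : Δ[n].obj k) :
    (X.lastFaceMap y).app k a
      = X.map (a.down ≫ SimplexCategory.δ (Fin.last (n+1))).op y := by
  rw [map_op_comp_apply]; rfl

lemma mqImg_val {k : SimplexCategoryᵒᵖ} (w : (Subfunctor.range (X.lastFaceMap y)).toFunctor.obj k) :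
    X.map (w.2.choose.down ≫ SimplexCategory.δ (Fin.last (n+1))).op y = w.1 := by
  rw [← lastFaceMap_app]; exact w.2.choose_spec

/-- second leg. -/
noncomputable def mqImg : (Subfunctor.range (X.lastFaceMap y)).toFunctor ⟶ X.MQ y where
  app k := TypeCat.ofHom fun w => Quotient.mk (X.relSetoid y k)
    (ULift.up.{u} (w.2.choose.down ≫ SimplexCategory.δ (Fin.last (n+1))))
  naturality k k' γ := by
    ext w
    apply Quotient.sound
    refine Or.inr ⟨⟨_, rfl⟩, ⟨γ.unop ≫ w.2.choose.down, by rw [Category.assoc]; exact std_map_down _ _⟩, ?_⟩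
    rw [show (ULift.up.{u} (((Subfunctor.range (X.lastFaceMap y)).toFunctor.map γ w).2.choose.down ≫
        SimplexCategory.δ (Fin.last (n+1)))).down = ((Subfunctor.range (X.lastFaceMap y)).toFunctor.map γ
        w).2.choose.down ≫ SimplexCategory.δ (Fin.last (n+1)) from rfl,
      mqImg_val]; erw [std_map_down]
    rw [show (ULift.up.{u} (w.2.choose.down ≫ SimplexCategory.δ (Fin.last (n+1)))).down =
        w.2.choose.down ≫ SimplexCategory.δ (Fin.last (n+1)) from rfl]
    rw [map_op_comp_apply, mqImg_val, Quiver.Hom.op_unop]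
    rfl

lemma mq_comm : SSet.stdSimplex.map (SimplexCategory.δ (Fin.last (n+1))) ≫ X.mqMk y =
    Subfunctor.toRange (X.lastFaceMap y) ≫ X.mqImg y := by
  ext k a
  apply Quotient.sound
  refine Or.inr ⟨⟨a.down, rfl⟩, ⟨_, rfl⟩, ?_⟩
  rw [show (ULift.up.{u} ((((Subfunctor.toRange (X.lastFaceMap y)).app k a)).2.choose.down ≫
      SimplexCategory.δ (Fin.last (n+1)))).down = ((Subfunctor.toRange (X.lastFaceMap y)).app k
      a).2.choose.down ≫ SimplexCategory.δ (Fin.last (n+1)) from rfl, mqImg_val]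
  erw [show ((SSet.stdSimplex.map (SimplexCategory.δ (Fin.last (n+1)))).app k a).down =
      a.down ≫ SimplexCategory.δ (Fin.last (n+1)) from rfl]
  rw [← lastFaceMap_app]
  rfl

/-- value of `s.inl` on elements of `Δ[n+1]` in terms of `s.inr`, for cocones `s`. -/
lemma cocone_inl_factor {s : PushoutCocone (SSet.stdSimplex.map
      (SimplexCategory.δ (Fin.last (n+1)))) (Subfunctor.toRange (X.lastFaceMap y))}
    {k : SimplexCategoryᵒᵖ} (a : k.unop ⟶ ⦋n⦌) :
    s.inl.app k (ULift.up.{u} (a ≫ SimplexCategory.δ (Fin.last (n+1)))) =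
      s.inr.app k ⟨X.map (a ≫ SimplexCategory.δ (Fin.last (n+1))).op y,
        ⟨ULift.up.{u} a, lastFaceMap_app X y (ULift.up.{u} a)⟩⟩ := by
  have h2 := congrArg (fun (t : _ ⟶ s.pt) => t.app k (ULift.up.{u} a)) s.condition
  refine h2.trans ?_
  show s.inr.app k ((Subfunctor.toRange (X.lastFaceMap y)).app k (ULift.up.{u} a)) = _
  exact congrArg (s.inr.app k) (Subtype.ext (lastFaceMap_app X y (ULift.up.{u} a)))

/-- the descent morphism out of the explicit model. -/
noncomputable def mqDesc (s : PushoutCocone (SSet.stdSimplex.map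
      (SimplexCategory.δ (Fin.last (n+1)))) (Subfunctor.toRange (X.lastFaceMap y))) :
    X.MQ y ⟶ s.pt where
  app k := TypeCat.ofHom (Quotient.lift (fun b => s.inl.app k b) (by
    rintro ⟨bd⟩ ⟨bd'⟩ (h | ⟨⟨a, ha⟩, ⟨a', ha'⟩, he⟩)
    · cases h; rfl
    · show s.inl.app k (ULift.up bd) = s.inl.app k (ULift.up bd')
      obtain rfl : bd = a ≫ SimplexCategory.δ (Fin.last (n+1)) := ha
      obtain rfl : bd' = a' ≫ SimplexCategory.δ (Fin.last (n+1)) := ha'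
      rw [cocone_inl_factor X y a, cocone_inl_factor X y a']
      exact congrArg (s.inr.app k) (Subtype.ext he)))
  naturality k k' γ := by
    ext q
    induction q using Quotient.ind with | _ b => ?_
    exact ConcreteCategory.congr_hom (s.inl.naturality γ) b

/-- the explicit model is a pushout. -/
noncomputable def mqIsColimit : IsColimit (PushoutCocone.mk (X.mqMk y) (X.mqImg y)
    (X.mq_comm y)) := by
  refine PushoutCocone.IsColimit.mk _ (X.mqDesc y) (fun s => rfl) (fun s => ?_) (fun s m h1 h2 => ?_)
  · ext k w
    refine (cocone_inl_factor X y w.2.choose.down).trans ?_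
    exact congrArg (s.inr.app k) (Subtype.ext (mqImg_val X y w))
  · ext k q
    induction q using Quotient.ind with | _ b => ?_
    exact ConcreteCategory.congr_hom (congrArg (fun (t : Δ[n+1] ⟶ s.pt) => t.app k) h1) b

/-- the comparison map. -/
noncomputable def mqDescX : X.MQ y ⟶ X where
  app k := TypeCat.ofHom (Quotient.lift (fun b => X.map b.down.op y) (by
    rintro b b' (rfl | ⟨_, _, he⟩)
    · rfl
    · exact he))
  naturality k k' γ := by
    ext q
    induction q using Quotient.ind with | _ b => ?_
    show X.map (Δ[n+1].map γ b).down.op y = X.map γ (X.map b.down.op y)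
    rw [std_map_down, map_op_comp_apply, Quiver.Hom.op_unop]

/-- the canonical isomorphism from the abstract pushout to the explicit model. -/
noncomputable def mqIso : pushout (SSet.stdSimplex.map (SimplexCategory.δ (Fin.last (n+1))))
    (Subfunctor.toRange (X.lastFaceMap y)) ≅ X.MQ y :=
  (pushoutIsPushout _ _).coconePointUniqueUpToIso (X.mqIsColimit y)

lemma regularityMap_factor : X.regularityMap y = (X.mqIso y).hom ≫ X.mqDescX y := by
  apply pushout.hom_ext
  · rw [regularityMap, pushout.inl_desc, ← Category.assoc]
    have : pushout.inl _ _ ≫ (X.mqIso y).hom = X.mqMk y :=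
      (pushoutIsPushout _ _).comp_coconePointUniqueUpToIso_hom (X.mqIsColimit y) WalkingSpan.left
    rw [this]
    ext k b
    rfl
  · rw [regularityMap, pushout.inr_desc, ← Category.assoc]
    have : pushout.inr _ _ ≫ (X.mqIso y).hom = X.mqImg y :=
      (pushoutIsPushout _ _).comp_coconePointUniqueUpToIso_hom (X.mqIsColimit y) WalkingSpan.right
    rw [this]
    ext k w
    exact (mqImg_val X y w).symm

lemma relR_iff {k : SimplexCategoryᵒᵖ} {b b' : Δ[n+1].obj k} : X.RelR y k b b' ↔
    (b = b' ∨ ((∃ a : k.unop ⟶ ⦋n⦌, b.down = a ≫ SimplexCategory.δ (Fin.last (n+1))) ∧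
    (∃ a' : k.unop ⟶ ⦋n⦌, b'.down = a' ≫ SimplexCategory.δ (Fin.last (n+1))) ∧
    X.map b.down.op y = X.map b'.down.op y)) := Iff.rfl

lemma mqDescX_injective_iff (k : SimplexCategoryᵒᵖ) :
    Function.Injective ((X.mqDescX y).app k) ↔
      ∀ α β : k.unop ⟶ ⦋n+1⦌, X.map α.op y = X.map β.op y →
        α = β ∨ ((∃ α', α = α' ≫ SimplexCategory.δ (Fin.last (n+1))) ∧
          (∃ β', β = β' ≫ SimplexCategory.δ (Fin.last (n+1)))) := by
  constructor
  · intro hinj α β h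
    have h0 : Quotient.mk (X.relSetoid y k) (ULift.up.{u} α)
        = Quotient.mk (X.relSetoid y k) (ULift.up.{u} β) := by
      apply hinj
      show X.map (ULift.up.{u} α).down.op y = X.map (ULift.up.{u} β).down.op y
      exact h
    have h1 := (relR_iff X y).1 (Quotient.exact h0)
    rcases h1 with h' | ⟨⟨a, ha⟩, ⟨a', ha'⟩, _⟩
    · exact Or.inl (congrArg ULift.down h')
    · exact Or.inr ⟨⟨a, ha⟩, ⟨a', ha'⟩⟩
  · intro hc q q' h
    induction q using Quotient.ind with | _ b => ?_
    induction q' using Quotient.ind with | _ b' => ?_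
    apply Quotient.sound
    have h' : X.map b.down.op y = X.map b'.down.op y := h
    rcases hc b.down b'.down h' with he | ⟨h1, h2⟩
    · exact Or.inl (ULift.ext _ _ he)
    · exact Or.inr ⟨h1, h2, h'⟩

/-- Elementwise characterisation of regularity. -/
def RegCond (X : SSet.{u}) : Prop :=
  ∀ (n : ℕ) (y : X _⦋n+1⦌), X.Nondegenerate y → ∀ (k : SimplexCategoryᵒᵖ)
    (α β : k.unop ⟶ ⦋n+1⦌), X.map α.op y = X.map β.op y →
    α = β ∨ ((∃ α', α = α' ≫ SimplexCategory.δ (Fin.last (n+1))) ∧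
      (∃ β', β = β' ≫ SimplexCategory.δ (Fin.last (n+1))))

lemma isRegular_iff_regCond : X.IsRegular ↔ RegCond X := by
  have key : ∀ (n : ℕ) (y : X _⦋n+1⦌) (k : SimplexCategoryᵒᵖ),
      Function.Injective ((X.regularityMap y).app k) ↔
        Function.Injective ((X.mqDescX y).app k) := by
    intro n y k
    have hbij : Function.Bijective ((X.mqIso y).hom.app k) :=
      (isIso_iff_bijective _).1 inferInstance
    have hfac : ∀ q, (X.regularityMap y).app k q
        = (X.mqDescX y).app k ((X.mqIso y).hom.app k q) := by
      intro q
      rw [regularityMap_factor]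
      rfl
    constructor
    · intro h a a' haa
      obtain ⟨b, rfl⟩ := hbij.surjective a
      obtain ⟨b', rfl⟩ := hbij.surjective a'
      have : (X.regularityMap y).app k b = (X.regularityMap y).app k b' := by
        rw [hfac, hfac]; exact haa
      rw [h this]
    · intro h a a' haa
      apply hbij.injective
      apply h
      rw [← hfac, ← hfac]
      exact haa
  constructor
  · intro hreg n y hy k α β h
    exact (mqDescX_injective_iff X y k).1 ((key n y k).1 (hreg n y hy k)) α β h
  · intro hrc n y hy k
    exact (key n y k).2 ((mqDescX_injective_iff X y k).2 (hrc n y hy k))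

/-- degeneracy for simplices over an arbitrary object of `SimplexCategory`. -/
def Deg (a : SimplexCategory) (y : X.obj (op a)) : Prop :=
  ∃ (b : SimplexCategory) (σ : a ⟶ b) (z : X.obj (op b)), b.len < a.len ∧ y = X.map σ.op z

lemma degenerate_iff_deg {n : ℕ} (y : X _⦋n⦌) : X.Degenerate y ↔ X.Deg ⦋n⦌ y := by
  constructor
  · rintro ⟨m, σ, z, hm, rfl⟩
    exact ⟨⦋m⦌, σ, z, by simpa using hm, rfl⟩
  · rintro ⟨b, σ, z, hb, rfl⟩
    refine ⟨b.len, σ ≫ eqToHom (SimplexCategory.mk_len b).symm,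
      X.map (eqToHom (SimplexCategory.mk_len b)).op z, by simpa using hb, ?_⟩
    have h0 : X.map (eqToHom (SimplexCategory.mk_len b).symm).op
        (X.map (eqToHom (SimplexCategory.mk_len b)).op z) = z := by
      rw [← FunctorToTypes.map_comp_apply, ← op_comp, eqToHom_trans, eqToHom_refl, op_id,
        FunctorToTypes.map_id_apply]
    rw [op_comp, FunctorToTypes.map_comp_apply, h0]

/-- Eilenberg–Zilber style decomposition (existence). -/
lemma exists_epi_nondeg (a : SimplexCategory) (y : X.obj (op a)) :
    ∃ (b : SimplexCategory) (σ : a ⟶ b) (z : X.obj (op b)),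
      Epi σ ∧ ¬ X.Deg b z ∧ y = X.map σ.op z := by
  suffices H : ∀ (N : ℕ) (a : SimplexCategory), a.len ≤ N → ∀ (y : X.obj (op a)),
      ∃ (b : SimplexCategory) (σ : a ⟶ b) (z : X.obj (op b)),
        Epi σ ∧ ¬ X.Deg b z ∧ y = X.map σ.op z from H a.len a le_rfl y
  intro N
  induction N with
  | zero =>
    intro a ha y
    refine ⟨a, 𝟙 a, y, inferInstance, ?_, by simp⟩
    rintro ⟨b, σ, z, hb, rfl⟩
    omega
  | succ n ih =>
    intro a ha y
    by_cases h : X.Deg a y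
    · obtain ⟨b, σ, z, hb, rfl⟩ := h
      obtain ⟨c, σ', w, hepi, hnd, hw⟩ := ih (image σ)
        (by have := SimplexCategory.len_le_of_mono (image.ι σ); omega)
        (X.map (image.ι σ).op z)
      refine ⟨c, factorThruImage σ ≫ σ', w, epi_comp _ _, hnd, ?_⟩
      rw [op_comp, FunctorToTypes.map_comp_apply, ← hw, ← FunctorToTypes.map_comp_apply, ← op_comp,
        image.fac]
    · exact ⟨a, 𝟙 a, y, inferInstance, h, by simp⟩

/-- A morphism to `⦋n+1⦌` factors through the last face iff it misses the last vertex. -/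
lemma factor_delta_last_iff {k : SimplexCategory} {n : ℕ} (γ : k ⟶ ⦋n+1⦌) :
    (∃ γ' : k ⟶ ⦋n⦌, γ = γ' ≫ SimplexCategory.δ (Fin.last (n+1))) ↔
      ∀ t, γ.toOrderHom t ≠ Fin.last (n+1) := by
  constructor
  · rintro ⟨γ', rfl⟩ t h
    have : Fin.castSucc (γ'.toOrderHom t) = Fin.last (n+1) := by
      simpa [SimplexCategory.δ, Fin.succAbove_last] using h
    exact (Fin.castSucc_lt_last _).ne this
  · intro h
    refine ⟨SimplexCategory.mkHom ⟨fun t => (γ.toOrderHom t).castPred (h t), ?_⟩, ?_⟩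
    · intro s t hst
      simp only [Fin.le_def, Fin.coe_castPred]
      exact γ.toOrderHom.monotone hst
    · ext t : 3
      show γ.toOrderHom t = Fin.succAbove (Fin.last (n+1)) ((γ.toOrderHom t).castPred (h t))
      rw [Fin.succAbove_last, Fin.castSucc_castPred]


lemma regCond_obj (hX : RegCond X) {c : SimplexCategory} (z : X.obj (op c)) (hz : ¬ X.Deg c z)
    {k : SimplexCategoryᵒᵖ} (α β : k.unop ⟶ c) (h : X.map α.op z = X.map β.op z) :
    α = β ∨ ((∀ t, α.toOrderHom t ≠ Fin.last c.len) ∧ (∀ t, β.toOrderHom t ≠ Fin.last c.len)) := by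
  rcases eq_or_ne c.len 0 with hl | hl
  · left
    ext t : 3
    haveI : Subsingleton (Fin (c.len + 1)) :=
      ⟨fun a b => by have ha := a.isLt; have hb := b.isLt; exact Fin.ext (by omega)⟩
    apply Subsingleton.elim
  · obtain ⟨m, hm⟩ := Nat.exists_eq_succ_of_ne_zero hl
    have hc : SimplexCategory.mk (m+1) = c := by
      rw [← Nat.succ_eq_add_one, ← hm]
    subst hc
    have hnd : X.Nondegenerate z := fun hd => hz ((X.degenerate_iff_deg z).1 hd)
    rcases hX m z hnd k α β h with h' | ⟨⟨α', hα⟩, ⟨β', hβ⟩⟩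
    · exact Or.inl h'
    · exact Or.inr ⟨(factor_delta_last_iff α).1 ⟨α', hα⟩, (factor_delta_last_iff β).1 ⟨β', hβ⟩⟩

/-- absorbing an elementary degeneracy pair into a map that identifies `j` and `j+1`. -/
lemma sigma_delta_absorb {m : ℕ} {c : SimplexCategory} (τ : SimplexCategory.mk (m+1) ⟶ c) (j : Fin (m+1))
    (hkey : τ.toOrderHom (Fin.castSucc j) = τ.toOrderHom j.succ) :
    (SimplexCategory.σ j ≫ SimplexCategory.δ j.succ) ≫ τ = τ := by
  ext t : 3
  show τ.toOrderHom (Fin.succAbove j.succ (Fin.predAbove j t)) = τ.toOrderHom t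
  rcases le_or_gt t (Fin.castSucc j) with h' | h'
  · rw [Fin.predAbove_of_le_castSucc _ _ h',
      Fin.succAbove_of_castSucc_lt _ _ (by
        rw [Fin.castSucc_castPred]
        exact lt_of_le_of_lt h' Fin.castSucc_lt_succ),
      Fin.castSucc_castPred]
  · rw [Fin.predAbove_of_castSucc_lt _ _ h']
    rcases eq_or_lt_of_le (Fin.castSucc_lt_iff_succ_le.1 h') with h'' | h''
    · subst h''
      rw [Fin.pred_succ, Fin.succAbove_of_castSucc_lt _ _ Fin.castSucc_lt_succ]
      exact hkey
    · rw [Fin.succAbove_of_le_castSucc _ _ (by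
        rw [Fin.le_def]
        have h3 := Fin.lt_def.1 h''
        simp only [Fin.val_succ, Fin.coe_castSucc, Fin.coe_pred] at h3 ⊢
        omega), Fin.succ_pred]

/-- If `X` admits a degreewise jointly injective family of maps into regular simplicial sets,
then `X` is regular. -/
lemma isRegular_of_jointly_injective {ι : Type*} (Y : ι → SSet.{u}) (hY : ∀ i, (Y i).IsRegular)
    (X : SSet.{u}) (π : ∀ i, X ⟶ Y i)
    (hinj : ∀ (k : SimplexCategoryᵒᵖ) (x x' : X.obj k),
      (∀ i, (π i).app k x = (π i).app k x') → x = x') :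
    X.IsRegular := by
  rw [isRegular_iff_regCond]
  intro n y hy k α β heq
  by_cases hab : α = β
  · exact Or.inl hab
  right
  choose b σ z hepi hnd hz using fun i => (Y i).exists_epi_nondeg ⦋n+1⦌ ((π i).app _ y)
  have hsurj : ∀ i, Function.Surjective (σ i).toOrderHom :=
    fun i => SimplexCategory.epi_iff_surjective.1 (hepi i)
  have hlast : ∀ i, (σ i).toOrderHom (Fin.last (n+1)) = Fin.last ((b i).len) := by
    intro i
    obtain ⟨s, hs⟩ := hsurj i (Fin.last _)
    exact le_antisymm (Fin.le_last _) (hs ▸ (σ i).toOrderHom.monotone (Fin.le_last s))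
  have hcomp : ∀ (γ : k.unop ⟶ ⦋n+1⦌) i,
      (Y i).map (γ ≫ σ i).op (z i) = (π i).app k (X.map γ.op y) := by
    intro γ i
    rw [(Y i).map_op_comp_apply γ (σ i) (z i), ← hz i, FunctorToTypes.naturality]
  -- main step: neither α nor β can reach the last vertex
  have main : ∀ (α β : k.unop ⟶ ⦋n+1⦌), X.map α.op y = X.map β.op y → α ≠ β →
      ∀ (t : Fin (k.unop.len + 1)), α.toOrderHom t = Fin.last (n+1) → False := by
    intro α β heq hab t ht
    have hsig : ∀ i, α ≫ σ i = β ≫ σ i := by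
      intro i
      have h1 : (Y i).map (α ≫ σ i).op (z i) = (Y i).map (β ≫ σ i).op (z i) := by
        rw [hcomp, hcomp, heq]
      rcases regCond_obj (Y i) (((Y i).isRegular_iff_regCond).1 (hY i)) (z i) (hnd i) _ _ h1
        with h' | ⟨h2, _⟩
      · exact h'
      · exact absurd (by
          show (σ i).toOrderHom (α.toOrderHom t) = _
          rw [ht, hlast i]) (h2 t)
    -- extract a pair of adjacent vertices identified by every `σ i`
    have hex : ∃ t₀, α.toOrderHom t₀ ≠ β.toOrderHom t₀ := by
      by_contra hco
      push_neg at hco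
      exact hab (by ext t' : 3; exact hco t')
    obtain ⟨t₀, ht₀⟩ := hex
    have hex2 : ∃ (lo hi : Fin (n+2)), lo < hi ∧
        ∀ i, (σ i).toOrderHom lo = (σ i).toOrderHom hi := by
      have hs : ∀ i, (σ i).toOrderHom (α.toOrderHom t₀) = (σ i).toOrderHom (β.toOrderHom t₀) :=
        fun i => congrArg (fun (f : k.unop ⟶ b i) => f.toOrderHom t₀) (hsig i)
      rcases lt_or_gt_of_ne ht₀ with h' | h'
      · exact ⟨_, _, h', hs⟩
      · exact ⟨_, _, h', fun i => (hs i).symm⟩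
    obtain ⟨lo, hi, hlohi, hs⟩ := hex2
    have hlone : lo ≠ Fin.last (n+1) := Fin.ne_last_of_lt hlohi
    set j : Fin (n+1) := lo.castPred hlone with hj
    have hcs : Fin.castSucc j = lo := Fin.castSucc_castPred _ _
    have hsl : j.succ ≤ hi := by
      rw [Fin.le_def]
      have h4 := Fin.lt_def.1 hlohi
      simp only [Fin.val_succ, hj, Fin.coe_castPred]
      omega
    have hkey : ∀ i, (σ i).toOrderHom (Fin.castSucc j) = (σ i).toOrderHom j.succ := by
      intro i
      refine le_antisymm ((σ i).toOrderHom.monotone (Fin.castSucc_le_succ j)) ?_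
      calc (σ i).toOrderHom j.succ ≤ (σ i).toOrderHom hi := (σ i).toOrderHom.monotone hsl
        _ = (σ i).toOrderHom lo := (hs i).symm
        _ = (σ i).toOrderHom (Fin.castSucc j) := by rw [hcs]
    -- y is degenerate: contradiction
    apply hy
    rw [X.degenerate_iff_deg]
    refine ⟨⦋n⦌, SimplexCategory.σ j, X.map (SimplexCategory.δ j.succ).op y, by simp, ?_⟩
    rw [← X.map_op_comp_apply]
    apply hinj
    intro i
    rw [FunctorToTypes.naturality, hz i, ← (Y i).map_op_comp_apply]
    rw [sigma_delta_absorb (σ i) j (hkey i)]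
  exact ⟨(factor_delta_last_iff α).2 (fun t ht => main α β heq hab t ht),
    (factor_delta_last_iff β).2 (fun t ht => main β α heq.symm (Ne.symm hab) t ht)⟩

/-- Regularity is closed under limits. -/
lemma isRegular_of_isLimit {J : Type u} [Category.{u} J] {F : J ⥤ SSet.{u}} {c : Cone F}
    (hc : IsLimit c) (hF : ∀ j, (F.obj j).IsRegular) : c.pt.IsRegular := by
  apply isRegular_of_jointly_injective (fun j => F.obj j) hF c.pt (fun j => c.π.app j)
  intro k x x' h
  apply (Types.isLimitEquivSections
    (isLimitOfPreserves ((evaluation SimplexCategoryᵒᵖ (Type u)).obj k) hc)).injective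
  apply Subtype.ext
  funext j
  exact h j

/-- The quotient simplicial set by a compatible family of equivalence relations. -/
def quotPresheaf (X : SSet.{u}) (r : ∀ k : SimplexCategoryᵒᵖ, Setoid (X.obj k))
    (hr : ∀ {k k' : SimplexCategoryᵒᵖ} (γ : k ⟶ k') (x x' : X.obj k),
      (r k).r x x' → (r k').r (X.map γ x) (X.map γ x')) : SSet.{u} where
  obj k := Quotient (r k)
  map {k k'} γ := TypeCat.ofHom (Quotient.lift (fun x => Quotient.mk (r k') (X.map γ x))
    (fun x x' h => Quotient.sound (hr γ x x' h)))
  map_id k := by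
    ext q
    induction q using Quotient.ind with | _ x => ?_
    simp [FunctorToTypes.map_id_apply]
  map_comp {k k' k''} γ γ' := by
    ext q
    induction q using Quotient.ind with | _ x => ?_
    simp [FunctorToTypes.map_comp_apply]

/-- The projection onto the quotient simplicial set. -/
def quotProj (X : SSet.{u}) (r : ∀ k : SimplexCategoryᵒᵖ, Setoid (X.obj k))
    (hr : ∀ {k k' : SimplexCategoryᵒᵖ} (γ : k ⟶ k') (x x' : X.obj k),
      (r k).r x x' → (r k').r (X.map γ x) (X.map γ x')) : X ⟶ X.quotPresheaf r hr where
  app k := TypeCat.ofHom fun x => Quotient.mk (r k) x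
  naturality k k' γ := rfl

end SSet

section

open SSet

/-- The solution set condition for the inclusion of regular simplicial sets. -/
lemma regular_solutionSetCondition :
    CategoryTheory.SolutionSetCondition.{u}
      (ObjectProperty.ι (fun X : SSet.{u} => X.IsRegular)) := by
  intro X
  classical
  refine ⟨{p : ∀ k : SimplexCategoryᵒᵖ, Setoid (X.obj k) //
      ∃ hr : (∀ {k k' : SimplexCategoryᵒᵖ} (γ : k ⟶ k') (x x' : X.obj k),
        (p k).r x x' → (p k').r (X.map γ x) (X.map γ x')),
      (X.quotPresheaf p hr).IsRegular},
    fun i => ⟨X.quotPresheaf i.1 i.2.choose, i.2.choose_spec⟩,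
    fun i => X.quotProj i.1 i.2.choose, ?_⟩
  intro Z h
  -- the kernel family of `h`
  set r : ∀ k : SimplexCategoryᵒᵖ, Setoid (X.obj k) := fun k => Setoid.ker (h.app k) with hrdef
  have hr : ∀ {k k' : SimplexCategoryᵒᵖ} (γ : k ⟶ k') (x x' : X.obj k),
      (r k).r x x' → (r k').r (X.map γ x) (X.map γ x') := by
    intro k k' γ x x' hxx
    have hxx' : h.app k x = h.app k x' := hxx
    show h.app k' (X.map γ x) = h.app k' (X.map γ x')
    rw [FunctorToTypes.naturality, FunctorToTypes.naturality, hxx']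
  -- the induced injection into `Z.obj`
  let m : X.quotPresheaf r hr ⟶ Z.obj :=
    { app := fun k => TypeCat.ofHom (Quotient.lift (h.app k) (fun x x' hxx => hxx))
      naturality := fun k k' γ => by
        ext q
        induction q using Quotient.ind with | _ x => ?_
        exact FunctorToTypes.naturality h γ x }
  have hminj : ∀ k, Function.Injective (m.app k) := by
    intro k q q' hqq
    induction q using Quotient.ind with | _ x => ?_
    induction q' using Quotient.ind with | _ x' => ?_
    exact Quotient.sound hqq
  have hreg : (X.quotPresheaf r hr).IsRegular := by
    apply isRegular_of_jointly_injective (fun _ : PUnit.{u+1} => Z.obj) (fun _ => Z.property)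
      _ (fun _ => m)
    intro k x x' hxx
    exact hminj k (hxx PUnit.unit)
  refine ⟨⟨r, hr, hreg⟩, ObjectProperty.homMk m, ?_⟩
  ext k x
  rfl

end

/-- The full subcategory of regular simplicial sets is reflective in the category of
simplicial sets: the inclusion functor admits a left adjoint (regularization). -/
theorem regular_reflective :
    Nonempty (Reflective (ObjectProperty.ι (fun X : SSet.{u} => X.IsRegular))) := by
  have hclosed : ∀ (J : Type u) [Category.{u} J],
      ObjectProperty.IsClosedUnderLimitsOfShape (fun X : SSet.{u} => X.IsRegular) J :=
    fun J _ => ⟨fun X ⟨h⟩ => SSet.isRegular_of_isLimit h.isLimit h.prop_diag_obj⟩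
  haveI hlim : HasLimits (ObjectProperty.FullSubcategory fun X : SSet.{u} => X.IsRegular) :=
    { has_limits_of_shape := fun J _ => by haveI := hclosed J; infer_instance }
  haveI : PreservesLimits (ObjectProperty.ι fun X : SSet.{u} => X.IsRegular) :=
    { preservesLimitsOfShape := fun {J} _ => by
        haveI := hclosed J
        exact preservesLimitOfShape_of_createsLimitsOfShape_and_hasLimitsOfShape _ }
  haveI := isRightAdjoint_of_preservesLimits_of_solutionSetCondition _
    regular_solutionSetCondition.{u}
  exact ⟨{ L := _, adj := Adjunction.ofIsRightAdjoint _ }⟩
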